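/- The G-orbit of a k-starter F under a finite group G is a 1-rotational k-factorization of the complete graph on G ∪ {∞}; conversely, every factor of a 1-rotational k-factorization of the complete graph on G ∪ {∞} is a k-starter under G. -/

import Mathlib

open SimpleGraph

/-- The image of a graph on `G ∪ {∞}` under right multiplication by `g` (with `∞ g = ∞`). -/
def shiftG {G : Type*} [Group G] (F : SimpleGraph (Option G)) (g : G) :
    SimpleGraph (Option G) :=
  F.map (Equiv.optionCongr (Equiv.mulRight g)).toEmbedding

/-- The `G`-stabilizer of a graph on `G ∪ {∞}`. -/
def stabG {G : Type*} [Group G] (F : SimpleGraph (Option G)) : Set G :=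
  {g | shiftG F g = F}

/-- A `k`-factor: a spanning `k`-regular subgraph of the complete graph. -/
def IsKFactor {V : Type*} (k : ℕ) (F : SimpleGraph V) : Prop :=
  ∀ v : V, (F.neighborSet v).ncard = k

/-- A `k`-factorization: a set of `k`-factors whose edges partition the complete graph. -/
def IsKFactorization {V : Type*} (k : ℕ) (𝓕 : Set (SimpleGraph V)) : Prop :=
  (∀ F ∈ 𝓕, IsKFactor k F) ∧
  ∀ u v : V, u ≠ v → ∃! F, F ∈ 𝓕 ∧ F.Adj u v

/-- A family of graphs on `G ∪ {∞}` is `1`-rotational if it is closed under the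
right multiplication action of `G`. -/
def IsRotational {G : Type*} [Group G] (𝓕 : Set (SimpleGraph (Option G))) : Prop :=
  ∀ F ∈ 𝓕, ∀ g : G, shiftG F g ∈ 𝓕

/-- The difference list of a graph on `G ∪ {∞}` covers every nonidentity element of `G`. -/
def DiffCovers {G : Type*} [Group G] (F : SimpleGraph (Option G)) : Prop :=
  ∀ d : G, d ≠ 1 → ∃ a b : G, F.Adj (some a) (some b) ∧ a * b⁻¹ = d

/-- A `k`-starter under `G`: a `k`-factor whose `G`-stabilizer has order `k` and whose
difference list covers `G ∖ {1}`. -/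
def IsStarter {G : Type*} [Group G] (k : ℕ) (F : SimpleGraph (Option G)) : Prop :=
  IsKFactor k F ∧ (stabG F).ncard = k ∧ DiffCovers F

/-- The graph `H` on `(G × ℤ_n) ∪ {∞}` constructed from a `2`-factor `F` of the complete
graph on `G ∪ {∞}`: join `∞` to `(x,k)` for `x ~ ∞` in `F`; join `(x,k)` to `(x,r)` for
`x ~ ∞` in `F` and `k ≠ r`; join `(x,k)` to `(y,r)` for every edge `[x,y]` of `F`
avoiding `∞`. -/
def Hgraph {G : Type*} [Group G] (F : SimpleGraph (Option G)) (n : ℕ) :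
    SimpleGraph (Option (G × Multiplicative (ZMod n))) :=
  SimpleGraph.fromRel (fun u v =>
    (∃ (x : G) (k : Multiplicative (ZMod n)),
        F.Adj none (some x) ∧ u = none ∧ v = some (x, k)) ∨
    (∃ (x : G) (k r : Multiplicative (ZMod n)),
        F.Adj none (some x) ∧ k ≠ r ∧ u = some (x, k) ∧ v = some (x, r)) ∨
    (∃ (x y : G) (k r : Multiplicative (ZMod n)),
        F.Adj (some x) (some y) ∧ u = some (x, k) ∧ v = some (y, r)))


section Helpers
open scoped Classical

variable {G : Type*} [Group G]

lemma shiftG_adj' (F : SimpleGraph (Option G)) (g : G) (u v : Option G) :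
    (shiftG F g).Adj u v ↔ F.Adj (Option.map (· * g⁻¹) u) (Option.map (· * g⁻¹) v) := by
  rw [shiftG, ← comap_symm, comap_adj]
  simp [Equiv.optionCongr, Option.map]

lemma shiftG_adj_none_some (F : SimpleGraph (Option G)) (g b : G) :
    (shiftG F g).Adj none (some b) ↔ F.Adj none (some (b * g⁻¹)) := by
  rw [shiftG_adj']; rfl

lemma shiftG_mul (F : SimpleGraph (Option G)) (g h : G) :
    shiftG (shiftG F g) h = shiftG F (g * h) := by
  rw [shiftG, shiftG, shiftG, SimpleGraph.map_map]
  congr 1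
  ext x : 1
  cases x <;> simp [mul_assoc]

lemma shiftG_one (F : SimpleGraph (Option G)) : shiftG F 1 = F := by
  have : (Equiv.optionCongr (Equiv.mulRight (1:G))).toEmbedding = Function.Embedding.refl _ := by
    ext x; cases x <;> simp
  rw [shiftG, this]; exact SimpleGraph.map_id F

lemma one_mem_stabG (F : SimpleGraph (Option G)) : (1:G) ∈ stabG F := shiftG_one F

lemma shiftG_eq_iff {F : SimpleGraph (Option G)} {g h : G} :
    shiftG F g = shiftG F h ↔ g * h⁻¹ ∈ stabG F := by
  constructor
  · intro he
    show shiftG F (g * h⁻¹) = F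
    have := congrArg (fun K => shiftG K h⁻¹) he
    simp only [shiftG_mul] at this
    rw [this, mul_inv_cancel, shiftG_one]
  · intro hs
    have : shiftG F (g * h⁻¹ * h) = shiftG F h := by
      rw [← shiftG_mul]; exact congrArg (fun K => shiftG K h) hs
    simpa using this

lemma shiftG_stab_mul {F : SimpleGraph (Option G)} {s : G} (hs : s ∈ stabG F) (g : G) :
    shiftG F (s * g) = shiftG F g := by
  rw [← shiftG_mul]; exact congrArg (fun K => shiftG K g) hs

lemma ncard_some_neighbors [Fintype G] (F : SimpleGraph (Option G)) (u : Option G) :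
    {y : G | F.Adj u (some y)}.ncard + (if F.Adj u none then 1 else 0)
      = (F.neighborSet u).ncard := by
  have hdecomp : F.neighborSet u
      = (some '' {y : G | F.Adj u (some y)}) ∪ (if F.Adj u none then {none} else ∅) := by
    ext w
    cases w with
    | none =>
        simp only [mem_neighborSet, Set.mem_union, Set.mem_image, Set.mem_setOf_eq]
        constructor
        · intro h; right; simp [h]
        · rintro (⟨y, _, h⟩ | h)
          · exact absurd h (by simp)
          · split at h <;> simp_all
    | some y =>
        simp only [mem_neighborSet, Set.mem_union, Set.mem_image, Set.mem_setOf_eq]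
        constructor
        · intro h; left; exact ⟨y, h, rfl⟩
        · rintro (⟨z, hz, hzy⟩ | h)
          · obtain rfl : z = y := Option.some_injective _ hzy
            exact hz
          · split at h <;> simp_all
  rw [hdecomp, Set.ncard_union_eq ?_ ?_ ?_]
  · congr 1
    · exact (Set.ncard_image_of_injective _ (Option.some_injective G)).symm
    · split <;> simp
  · split
    · simp
    · simp
  · exact ((Set.toFinite _))
  · split <;> exact Set.toFinite _

lemma coset_unique [Fintype G] {F : SimpleGraph (Option G)} {k : ℕ}
    (hst : (stabG F).ncard = k) {u v : Option G}
    (hS : {g : G | (shiftG F g).Adj u v}.ncard = k) (hk : k ≠ 0) :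
    ∃! H, H ∈ {H | ∃ g : G, H = shiftG F g} ∧ H.Adj u v := by
  set S := {g : G | (shiftG F g).Adj u v} with hSdef
  have hSne : S.Nonempty := by
    rw [Set.nonempty_iff_ne_empty]
    intro h
    rw [h] at hS
    simp at hS
    exact hk hS.symm
  obtain ⟨g0, hg0⟩ := hSne
  have hTS : (fun s => s * g0) '' stabG F ⊆ S := by
    rintro _ ⟨s, hs, rfl⟩
    show (shiftG F (s * g0)).Adj u v
    rw [shiftG_stab_mul hs]
    exact hg0
  have hT : ((fun s => s * g0) '' stabG F).ncard = k := by
    rw [Set.ncard_image_of_injective _ (mul_left_injective g0), hst]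
  have hST : (fun s => s * g0) '' stabG F = S :=
    Set.eq_of_subset_of_ncard_le hTS (by rw [hT, hS]) (Set.toFinite _)
  refine ⟨shiftG F g0, ⟨⟨g0, rfl⟩, hg0⟩, ?_⟩
  rintro H ⟨⟨g1, rfl⟩, hadj⟩
  have hg1 : g1 ∈ S := hadj
  rw [← hST] at hg1
  obtain ⟨s, hs, rfl⟩ := hg1
  exact shiftG_stab_mul hs g0

lemma S_infty_ncard [Fintype G] (F : SimpleGraph (Option G)) (x : G) :
    {g : G | (shiftG F g).Adj none (some x)}.ncard = (F.neighborSet none).ncard := by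
  have himg : (fun g : G => some (x * g⁻¹)) '' {g : G | (shiftG F g).Adj none (some x)}
      = F.neighborSet none := by
    ext w
    constructor
    · rintro ⟨g, hg, rfl⟩
      have := (shiftG_adj' F g none (some x)).mp hg
      simpa using this
    · intro hw
      cases w with
      | none => exact absurd hw (F.irrefl (v := none))
      | some y =>
          refine ⟨y⁻¹ * x, ?_, by simp⟩
          show (shiftG F _).Adj none (some x)
          rw [shiftG_adj']
          simpa using hw
  have hinj : Function.Injective (fun g : G => some (x * g⁻¹)) := by
    intro a b hab
    simp only [Option.some_inj, mul_right_inj] at hab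
    exact inv_injective hab
  rw [← himg, Set.ncard_image_of_injective _ hinj]

lemma shiftG_neighborSet [Fintype G] (F : SimpleGraph (Option G)) (g : G) (v : Option G) :
    ((shiftG F g).neighborSet v).ncard = (F.neighborSet (Option.map (· * g⁻¹) v)).ncard := by
  have himg : (fun w : Option G => Option.map (· * g⁻¹) w) '' ((shiftG F g).neighborSet v)
      = F.neighborSet (Option.map (· * g⁻¹) v) := by
    ext w
    constructor
    · rintro ⟨w', hw', rfl⟩
      exact (shiftG_adj' F g v w').mp hw'
    · intro hw
      refine ⟨Option.map (· * g) w, ?_, ?_⟩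
      · show (shiftG F g).Adj v (Option.map (· * g) w)
        rw [shiftG_adj']
        have : Option.map (· * g⁻¹) (Option.map (· * g) w) = w := by
          cases w <;> simp
        rw [this]; exact hw
      · cases w <;> simp
  have hinj : Function.Injective (fun w : Option G => Option.map (· * g⁻¹) w) := by
    intro a b hab
    cases a <;> cases b <;> simp_all
  rw [← himg, Set.ncard_image_of_injective _ hinj]

lemma S_some_ncard [Fintype G] {k : ℕ} {F : SimpleGraph (Option G)}
    (hreg : ∀ v, (F.neighborSet v).ncard = k)
    (hst : (stabG F).ncard = k)
    (hcov : ∀ d : G, d ≠ 1 → ∃ a b : G, F.Adj (some a) (some b) ∧ a * b⁻¹ = d)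
    {a b : G} (hab : a ≠ b) :
    {g : G | (shiftG F g).Adj (some a) (some b)}.ncard = k := by
  set n := Fintype.card G with hn
  set P : Finset (G × G) := Finset.univ.filter (fun p => F.Adj (some p.1) (some p.2)) with hP
  set fib : G → Finset (G × G) := fun d => P.filter (fun p => p.1 * p.2⁻¹ = d) with hfib
  have hrow : ∀ x : G, (Finset.univ.filter (fun y => F.Adj (some x) (some y))).card
      + (if F.Adj (some x) none then 1 else 0) = k := by
    intro x
    have h1 : {y : G | F.Adj (some x) (some y)}
        = ↑(Finset.univ.filter (fun y => F.Adj (some x) (some y))) := by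
      ext y; simp
    have := ncard_some_neighbors F (some x)
    rw [h1, Set.ncard_coe_finset, hreg] at this
    exact this
  have hinfcol : (Finset.univ.filter (fun x : G => F.Adj (some x) none)).card = k := by
    have h1 : {y : G | F.Adj none (some y)}
        = ↑(Finset.univ.filter (fun x : G => F.Adj (some x) none)) := by
      ext y; simp [adj_comm]
    have := ncard_some_neighbors F none
    rw [h1, Set.ncard_coe_finset, hreg] at this
    simpa using this
  have hPcard : P.card + k = n * k := by
    have hfiber := Finset.card_eq_sum_card_fiberwise
      (f := Prod.fst) (s := P) (t := Finset.univ) (fun p _ => Finset.mem_univ _)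
    have hxcard : ∀ x : G, (P.filter (fun p => p.1 = x)).card
        = (Finset.univ.filter (fun y => F.Adj (some x) (some y))).card := by
      intro x
      apply Finset.card_nbij' (fun p => p.2) (fun y => (x, y))
      · intro p hp
        rw [Finset.mem_coe, Finset.mem_filter, hP, Finset.mem_filter] at hp
        rw [Finset.mem_coe]
        simp only [Finset.mem_filter, Finset.mem_univ, true_and] at hp ⊢
        obtain ⟨h1, h2⟩ := hp
        subst h2; exact h1
      · intro y hy
        rw [Finset.mem_coe, Finset.mem_filter] at hy
        simp [hP, hy.2]
      · intro p hp
        rw [Finset.mem_coe, Finset.mem_filter] at hp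
        obtain ⟨h1, h2⟩ := hp
        rw [← h2]
      · intro y hy; rfl
    rw [hfiber]
    calc (∑ x : G, (P.filter (fun p => p.1 = x)).card) + k
        = (∑ x : G, (Finset.univ.filter (fun y => F.Adj (some x) (some y))).card) + k := by
          rw [Finset.sum_congr rfl (fun x _ => hxcard x)]
      _ = (∑ x : G, ((Finset.univ.filter (fun y => F.Adj (some x) (some y))).card
            + (if F.Adj (some x) none then 1 else 0))) := by
          rw [Finset.sum_add_distrib]
          congr 1
          rw [Finset.sum_boole]
          simp [hinfcol]
      _ = ∑ x : G, k := Finset.sum_congr rfl (fun x _ => hrow x)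
      _ = n * k := by simp [hn, mul_comm]
  have hmem : ∀ p ∈ P, p.1 * p.2⁻¹ ∈ Finset.univ.erase 1 := by
    intro p hp
    simp only [hP, Finset.mem_filter, Finset.mem_univ, true_and] at hp
    simp only [Finset.mem_erase, Finset.mem_univ, and_true]
    intro h
    rw [mul_inv_eq_one] at h
    exact hp.ne (congrArg some h)
  have hsplit : P.card = ∑ d ∈ Finset.univ.erase 1, (fib d).card :=
    Finset.card_eq_sum_card_fiberwise hmem
  have hfib_ge : ∀ d ∈ Finset.univ.erase (1:G), k ≤ (fib d).card := by
    intro d hd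
    rw [Finset.mem_erase] at hd
    obtain ⟨x, y, hxy, hdiff⟩ := hcov d hd.1
    have hsub : (fun s => (x * s, y * s)) '' stabG F ⊆ ↑(fib d) := by
      rintro _ ⟨s, hs, rfl⟩
      simp only [hfib, hP, Finset.mem_coe, Finset.mem_filter, Finset.mem_univ, true_and]
      constructor
      · have hs' : shiftG F s = F := hs
        rw [← hs', shiftG_adj']
        simpa [mul_assoc] using hxy
      · rw [← hdiff]; group
    have hinj : Function.Injective (fun s : G => (x * s, y * s)) := by
      intro s t hst'
      have := congrArg Prod.fst hst'
      simpa using this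
    calc k = ((fun s => (x * s, y * s)) '' stabG F).ncard := by
            rw [Set.ncard_image_of_injective _ hinj, hst]
      _ ≤ (↑(fib d) : Set (G × G)).ncard := Set.ncard_le_ncard hsub (Set.toFinite _)
      _ = (fib d).card := Set.ncard_coe_finset _
  have hcard_erase : (Finset.univ.erase (1:G)).card = n - 1 := by
    rw [Finset.card_erase_of_mem (Finset.mem_univ _), Finset.card_univ]
  have hfib_eq : ∀ d ∈ Finset.univ.erase (1:G), (fib d).card = k := by
    by_contra hcon
    push_neg at hcon
    obtain ⟨d0, hd0, hne⟩ := hcon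
    have hlt : ∑ _d ∈ Finset.univ.erase (1:G), k
        < ∑ d ∈ Finset.univ.erase (1:G), (fib d).card := by
      apply Finset.sum_lt_sum (fun d hd => hfib_ge d hd)
      exact ⟨d0, hd0, lt_of_le_of_ne (hfib_ge d0 hd0) (Ne.symm hne)⟩
    rw [Finset.sum_const, hcard_erase, ← hsplit, smul_eq_mul] at hlt
    have hn1 : 1 ≤ n := Fintype.card_pos
    have hnn : n - 1 + 1 = n := by omega
    have haux : (n - 1) * k + k = n * k := by
      calc (n - 1) * k + k = ((n - 1) + 1) * k := by ring
        _ = n * k := by rw [hnn]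
    omega
  have hd : a * b⁻¹ ∈ Finset.univ.erase (1:G) := by
    simp only [Finset.mem_erase, Finset.mem_univ, and_true]
    intro h; exact hab (by rwa [mul_inv_eq_one] at h)
  rw [← hfib_eq _ hd, ← Set.ncard_coe_finset (fib (a * b⁻¹))]
  have himg : (fun g : G => (a * g⁻¹, b * g⁻¹)) '' {g : G | (shiftG F g).Adj (some a) (some b)}
      = ↑(fib (a * b⁻¹)) := by
    ext p
    simp only [hfib, hP, Set.mem_image, Set.mem_setOf_eq, Finset.mem_coe, Finset.mem_filter,
      Finset.mem_univ, true_and]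
    constructor
    · rintro ⟨g, hg, rfl⟩
      rw [shiftG_adj'] at hg
      exact ⟨hg, by group⟩
    · rintro ⟨hadj, hdiff⟩
      have h1 : a * (p.1⁻¹ * a)⁻¹ = p.1 := by group
      have h2 : b * (p.1⁻¹ * a)⁻¹ = p.2 := by
        have hp1 : p.1 = a * b⁻¹ * p.2 := by
          rw [← hdiff]; group
        rw [hp1]; group
      refine ⟨p.1⁻¹ * a, ?_, by rw [h1, h2]⟩
      show (shiftG F (p.1⁻¹ * a)).Adj (some a) (some b)
      rw [shiftG_adj']
      show F.Adj (some (a * (p.1⁻¹ * a)⁻¹)) (some (b * (p.1⁻¹ * a)⁻¹))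
      rw [h1, h2]
      exact hadj
  have hinj : Function.Injective (fun g : G => (a * g⁻¹, b * g⁻¹)) := by
    intro s t hst'
    have := congrArg Prod.fst hst'
    simp only [mul_right_inj] at this
    exact inv_injective this
  rw [← himg, Set.ncard_image_of_injective _ hinj]

lemma neighbors_none_nonempty [Fintype G] {k : ℕ} {F : SimpleGraph (Option G)}
    (hreg : ∀ v, (F.neighborSet v).ncard = k) (hk0 : k ≠ 0) :
    {y : G | F.Adj none (some y)}.Nonempty := by
  have h := ncard_some_neighbors F none
  rw [if_neg (F.irrefl (v := none)), add_zero, hreg] at h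
  rw [Set.nonempty_iff_ne_empty]
  intro hempty
  rw [hempty] at h
  simp at h
  exact hk0 h.symm

end Helpers

theorem stmt14 {G : Type*} [Group G] [Fintype G] (k : ℕ) (hk : k ∣ Fintype.card G) :
    (∀ F : SimpleGraph (Option G), IsStarter k F →
       IsKFactorization k {H | ∃ g : G, H = shiftG F g} ∧
       IsRotational {H | ∃ g : G, H = shiftG F g}) ∧
    (∀ 𝓕 : Set (SimpleGraph (Option G)), IsKFactorization k 𝓕 → IsRotational 𝓕 →
       ∀ F ∈ 𝓕, IsStarter k F) := by
  constructor
  · -- forward direction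
    intro F hF
    obtain ⟨hreg, hst, hcov⟩ := hF
    have hk0 : k ≠ 0 := by
      intro h
      rw [h] at hst
      have hne : (stabG F).Nonempty := ⟨1, one_mem_stabG F⟩
      have := (Set.ncard_pos (Set.toFinite (stabG F))).mpr hne
      omega
    refine ⟨⟨?_, ?_⟩, ?_⟩
    · rintro H ⟨g, rfl⟩
      intro v
      rw [shiftG_neighborSet]
      exact hreg _
    · intro u v huv
      have hS : {g : G | (shiftG F g).Adj u v}.ncard = k := by
        match u, v with
        | none, none => exact absurd rfl huv
        | none, some b => rw [S_infty_ncard]; exact hreg none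
        | some a, none =>
            have heq : {g : G | (shiftG F g).Adj (some a) none}
                = {g : G | (shiftG F g).Adj none (some a)} := by
              ext g
              simp only [Set.mem_setOf_eq]
              exact adj_comm _ _ _
            rw [heq, S_infty_ncard]; exact hreg none
        | some a, some b =>
            exact S_some_ncard hreg hst hcov (fun h => huv (congrArg some h))
      exact coset_unique hst hS hk0
    · rintro H ⟨g, rfl⟩ h
      exact ⟨g * h, shiftG_mul F g h⟩
  · -- converse direction
    intro 𝓕 hfac hrot F hF
    obtain ⟨hfactor, huniq⟩ := hfac
    have hregF := hfactor F hF
    have hk0 : k ≠ 0 := by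
      intro h
      rw [h, zero_dvd_iff] at hk
      exact absurd hk Fintype.card_pos.ne'
    have hne := neighbors_none_nonempty hregF hk0
    refine ⟨hregF, ?_, ?_⟩
    · -- stabilizer cardinality
      have hScard : {g : G | (shiftG F g).Adj none (some 1)}.ncard = k := by
        rw [S_infty_ncard]; exact hregF none
      have hSne : {g : G | (shiftG F g).Adj none (some 1)}.Nonempty := by
        rw [Set.nonempty_iff_ne_empty]
        intro hempty
        rw [hempty] at hScard
        simp at hScard
        exact hk0 hScard.symm
      obtain ⟨g0, hg0⟩ := hSne
      have hST : {g : G | (shiftG F g).Adj none (some 1)} = (fun s => s * g0) '' stabG F := by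
        apply subset_antisymm
        · intro g hg
          have h1 : shiftG F g ∈ 𝓕 := hrot F hF g
          have h2 : shiftG F g0 ∈ 𝓕 := hrot F hF g0
          have heq : shiftG F g = shiftG F g0 :=
            (huniq none (some 1) (by simp)).unique ⟨h1, hg⟩ ⟨h2, hg0⟩
          rw [shiftG_eq_iff] at heq
          exact ⟨g * g0⁻¹, heq, inv_mul_cancel_right g g0⟩
        · rintro _ ⟨s, hs, rfl⟩
          show (shiftG F (s * g0)).Adj none (some 1)
          rw [shiftG_stab_mul hs]
          exact hg0
      rw [hST, Set.ncard_image_of_injective _ (mul_left_injective g0)] at hScard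
      exact hScard
    · -- difference covering
      intro d hd
      have hd' : (some d : Option G) ≠ some 1 := fun h => hd (Option.some_injective _ h)
      obtain ⟨H, ⟨hHmem, hHadj⟩, -⟩ := huniq (some d) (some 1) hd'
      have hregH := hfactor H hHmem
      obtain ⟨x, hx⟩ := neighbors_none_nonempty hregH hk0
      obtain ⟨y0, hy0⟩ := hne
      have hGadj : (shiftG F (y0⁻¹ * x)).Adj none (some x) := by
        rw [shiftG_adj_none_some]
        have hxy : x * (y0⁻¹ * x)⁻¹ = y0 := by group
        rw [hxy]
        exact hy0
      have hHG : H = shiftG F (y0⁻¹ * x) :=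
        (huniq none (some x) (by simp)).unique ⟨hHmem, hx⟩ ⟨hrot F hF _, hGadj⟩
      rw [hHG, shiftG_adj'] at hHadj
      exact ⟨d * (y0⁻¹ * x)⁻¹, 1 * (y0⁻¹ * x)⁻¹, hHadj, by group⟩
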